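/- Let n ≥ 2 and let 𝒜 = {A_1,…,A_K} be a finite collection of n×n matrices over 𝔽 (𝔽 = ℝ or ℂ) that possess a common nontrivial invariant subspace. Then there exists a nonzero rank-deficient matrix Z and a sequence (Q_j) of invertible matrices with Q_j → Z such that sup_j f_𝒜(Q_j) < ∞. -/

import Mathlib

open Filter Topology Matrix

/-- The joint-diagonalization cost functional
`f_𝒜(Q) = (1/2) ∑ₖ ∑_{i≠j} |(Q⁻¹ Aₖ Q)_{ij}|²`. -/
noncomputable def costF {𝕜 : Type*} [RCLike 𝕜] {n K : ℕ}
    (A : Fin K → Matrix (Fin n) (Fin n) 𝕜) (Q : Matrix (Fin n) (Fin n) 𝕜) : ℝ :=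
  (1 / 2) * ∑ k, ∑ i, ∑ j, if i ≠ j then ‖(Q⁻¹ * A k * Q) i j‖ ^ 2 else 0

/-- if the matrices `A₁,…,A_K` possess a common nontrivial invariant
subspace, then there is a nonzero rank-deficient matrix `Z` and a sequence of
invertible matrices `Q_j → Z` along which `f_𝒜` stays bounded. -/
theorem exists_bounded_costF_of_common_invariant_subspace
    {𝕜 : Type*} [RCLike 𝕜] {n K : ℕ} (hn : 2 ≤ n)
    (A : Fin K → Matrix (Fin n) (Fin n) 𝕜)
    (hA : ∃ Y : Submodule 𝕜 (Fin n → 𝕜), Y ≠ ⊥ ∧ Y ≠ ⊤ ∧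
      ∀ k, ∀ x ∈ Y, (A k).mulVec x ∈ Y) :
    ∃ (Z : Matrix (Fin n) (Fin n) 𝕜) (Q : ℕ → Matrix (Fin n) (Fin n) 𝕜),
      Z ≠ 0 ∧ Z.rank < n ∧ (∀ j, IsUnit (Q j)) ∧ Tendsto Q atTop (𝓝 Z) ∧
      ∃ C : ℝ, ∀ j, costF A (Q j) ≤ C := by
  obtain ⟨Y, hYbot, hYtop, hInv⟩ := hA
  obtain ⟨W, hW⟩ := Submodule.exists_isCompl Y
  set f : (Fin n → 𝕜) →ₗ[𝕜] (Fin n → 𝕜) :=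
    Y.subtype ∘ₗ (Y.linearProjOfIsCompl W hW) with hf
  have hf_mem : ∀ x, f x ∈ Y := fun x => (Y.linearProjOfIsCompl W hW x).2
  have hf_id : ∀ x ∈ Y, f x = x := fun x hx => by
    exact congrArg Subtype.val (Submodule.projectionOnto_apply_left hW ⟨x, hx⟩)
  set E : Matrix (Fin n) (Fin n) 𝕜 := LinearMap.toMatrix' f with hEdef
  have hE_mulVec : ∀ x, E.mulVec x = f x := fun x => by
    rw [hEdef, ← Matrix.toLin'_apply, Matrix.toLin'_toMatrix']
  have hEE : E * E = E := by
    rw [hEdef, ← LinearMap.toMatrix'_comp]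
    congr 1
    exact LinearMap.ext fun x => hf_id (f x) (hf_mem x)
  have hEF : E * (1 - E) = 0 := by rw [mul_sub, mul_one, hEE, sub_self]
  have hFE : (1 - E) * E = 0 := by rw [sub_mul, one_mul, hEE, sub_self]
  have hFF : (1 - E) * (1 - E) = 1 - E := by rw [sub_mul, one_mul, mul_sub, mul_one, hEE]; abel
  -- invariance: (1-E) * A k * E = 0
  have hFAE : ∀ k, (1 - E) * A k * E = 0 := by
    intro k
    ext i i'
    have h : ∀ x, ((1 - E) * A k * E).mulVec x = 0 := by
      intro x
      have h1 : (A k).mulVec (f x) ∈ Y := hInv k _ (hf_mem x)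
      rw [← Matrix.mulVec_mulVec, ← Matrix.mulVec_mulVec, hE_mulVec x,
        Matrix.sub_mulVec, Matrix.one_mulVec, hE_mulVec, hf_id _ h1, sub_self]
    have h2 := congrFun (h (Pi.single i' 1)) i
    simpa [Matrix.mulVec_single] using h2
  -- key multiplication identity
  have hmul : ∀ a b : 𝕜, a * b = 1 →
      (E + a • (1 - E)) * (E + b • (1 - E)) = 1 := by
    intro a b hab
    simp only [mul_add, add_mul, Matrix.smul_mul, Matrix.mul_smul, hEE, hEF, hFE, hFF,
      smul_smul, smul_zero, add_zero, zero_add]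
    rw [mul_comm b a, hab, one_smul]
    abel
  set t : ℕ → 𝕜 := fun j => (((j : 𝕜) + 1))⁻¹ with ht
  have ht_ne : ∀ j, t j ≠ 0 := fun j =>
    inv_ne_zero (Nat.cast_add_one_ne_zero j)
  set Q : ℕ → Matrix (Fin n) (Fin n) 𝕜 := fun j => E + t j • (1 - E) with hQ
  have hQinv : ∀ j, (Q j)⁻¹ = E + (t j)⁻¹ • (1 - E) := fun j =>
    Matrix.inv_eq_right_inv (hmul _ _ (mul_inv_cancel₀ (ht_ne j)))
  have hQunit : ∀ j, IsUnit (Q j) := by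
    intro j
    exact ⟨⟨Q j, E + (t j)⁻¹ • (1 - E), hmul _ _ (mul_inv_cancel₀ (ht_ne j)),
      hmul _ _ (inv_mul_cancel₀ (ht_ne j))⟩, rfl⟩
  -- conjugated matrix
  have hconj : ∀ j k, (Q j)⁻¹ * A k * Q j =
      (E * A k * E + (1 - E) * A k * (1 - E)) + t j • (E * A k * (1 - E)) := by
    intro j k
    rw [hQinv]
    simp only [hQ, mul_add, add_mul, Matrix.smul_mul, Matrix.mul_smul, smul_smul,
      mul_inv_cancel₀ (ht_ne j), one_smul, hFAE, smul_zero, zero_mul, Matrix.zero_mul]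
    abel
  have ht_normeq : ∀ j : ℕ, ‖t j‖ = 1 / ((j : ℝ) + 1) := by
    intro j
    have h1 : ((j : 𝕜) + 1) = ((j + 1 : ℕ) : 𝕜) := by push_cast; ring
    show ‖((j : 𝕜) + 1)⁻¹‖ = _
    rw [h1, norm_inv, RCLike.norm_natCast, one_div]
    push_cast
    ring
  have ht_norm : ∀ j, ‖t j‖ ≤ 1 := by
    intro j
    rw [ht_normeq]
    rw [div_le_one (by positivity)]
    linarith [Nat.cast_nonneg (α := ℝ) j]
  -- Z and basic properties
  refine ⟨E, Q, ?_, ?_, hQunit, ?_, ?_⟩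
  · -- E ≠ 0
    obtain ⟨y, hyY, hy0⟩ := Submodule.exists_mem_ne_zero_of_ne_bot hYbot
    intro hE0
    apply hy0
    have := hE_mulVec y
    rw [hE0, Matrix.zero_mulVec, hf_id y hyY] at this
    exact this.symm
  · -- rank E < n
    have hle : LinearMap.range E.mulVecLin ≤ Y := by
      rintro _ ⟨x, rfl⟩
      rw [Matrix.mulVecLin_apply, hE_mulVec]
      exact hf_mem x
    have h1 : E.rank ≤ Module.finrank 𝕜 Y := by
      rw [Matrix.rank]
      exact Submodule.finrank_mono hle
    have h2 : Module.finrank 𝕜 Y < Module.finrank 𝕜 (Fin n → 𝕜) :=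
      Submodule.finrank_lt hYtop
    rw [Module.finrank_fin_fun] at h2
    omega
  · -- Tendsto
    have ht0 : Tendsto t atTop (𝓝 0) := by
      rw [tendsto_zero_iff_norm_tendsto_zero]
      have heq : (fun j : ℕ => ‖t j‖) = fun j : ℕ => 1 / ((j : ℝ) + 1) :=
        funext ht_normeq
      rw [heq]
      exact tendsto_one_div_add_atTop_nhds_zero_nat
    have h1 : Tendsto (fun j => t j • ((1 : Matrix (Fin n) (Fin n) 𝕜) - E)) atTop
        (𝓝 ((0 : 𝕜) • ((1 : Matrix (Fin n) (Fin n) 𝕜) - E))) :=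
      ht0.smul_const _
    have h2 : Tendsto Q atTop (𝓝 (E + (0 : 𝕜) • ((1 : Matrix (Fin n) (Fin n) 𝕜) - E))) :=
      h1.const_add E
    simpa using h2
  · -- bound
    refine ⟨(1 / 2) * ∑ k, ∑ i, ∑ i',
      (‖(E * A k * E + (1 - E) * A k * (1 - E)) i i'‖ + ‖(E * A k * (1 - E)) i i'‖) ^ 2, ?_⟩
    intro j
    unfold costF
    apply mul_le_mul_of_nonneg_left ?_ (by norm_num : (0:ℝ) ≤ 1/2)
    apply Finset.sum_le_sum; intro k _
    apply Finset.sum_le_sum; intro i _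
    apply Finset.sum_le_sum; intro i' _
    split_ifs
    · rw [hconj]
      have hb : ‖((E * A k * E + (1 - E) * A k * (1 - E)) + t j • (E * A k * (1 - E))) i i'‖ ≤
          ‖(E * A k * E + (1 - E) * A k * (1 - E)) i i'‖ + ‖(E * A k * (1 - E)) i i'‖ := by
        rw [Matrix.add_apply]
        refine (norm_add_le _ _).trans ?_
        gcongr
        rw [Matrix.smul_apply, norm_smul]
        calc ‖t j‖ * ‖(E * A k * (1 - E)) i i'‖ ≤ 1 * ‖(E * A k * (1 - E)) i i'‖ := by
              gcongr; exact ht_norm j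
          _ = _ := one_mul _
      exact pow_le_pow_left₀ (norm_nonneg _) hb 2
    · positivity
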